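/- Let I be a tall proper ideal on ω which is σ-pseudobounded under inclusion. Then (I, ⊆) is not Tukey reducible to ω × ω₁ (with the product order). -/

import Mathlib

open Cardinal Set

lemma omega1_seq_bounded.{u} (w : ℕ → (Cardinal.aleph 1 : Cardinal.{u}).ord.ToType) :
    ∃ b, ∀ j, w j ≤ b := by
  let e := Ordinal.ToType.mk (o := (Cardinal.aleph 1 : Cardinal.{u}).ord)
  have hcof : Cardinal.lift.{u} (#ℕ) < (Cardinal.aleph 1 : Cardinal.{u}).ord.cof := by
    rw [Cardinal.mk_nat, Cardinal.lift_aleph0, Cardinal.isRegular_aleph_one.cof_eq]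
    exact Cardinal.aleph0_lt_aleph_one
  have hlt : (⨆ j, ((e.symm (w j) : Set.Iio (Cardinal.aleph 1 : Cardinal.{u}).ord) : Ordinal))
      < (Cardinal.aleph 1 : Cardinal.{u}).ord :=
    Ordinal.iSup_lt_ord_lift
      (f := fun j => ((e.symm (w j) : Set.Iio (Cardinal.aleph 1 : Cardinal.{u}).ord) : Ordinal))
      hcof (fun j => (e.symm (w j)).2)
  refine ⟨e ⟨_, hlt⟩, fun j => ?_⟩
  have h1 : e.symm (w j) ≤ ⟨_, hlt⟩ :=
    Subtype.mk_le_mk.2 (le_ciSup (Ordinal.bddAbove_range _) j)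
  simpa using e.le_iff_le.2 h1

/-- If `I` is a tall proper ideal on `ω` which is σ-pseudobounded under
inclusion, then `(I, ⊆)` is not Tukey reducible to `ω × ω₁` with the product
(coordinatewise) order: there is no Tukey map from `I` to `ℕ × ω₁`. -/
theorem sigmaPseudobounded_not_tukey_le_omega_times_omega1 (I : Set (Set ℕ))
    (hfin : ∀ A : Set ℕ, A.Finite → A ∈ I)
    (hdown : ∀ A ∈ I, ∀ B : Set ℕ, B ⊆ A → B ∈ I)
    (hunion : ∀ A ∈ I, ∀ B ∈ I, A ∪ B ∈ I)
    (hproper : Set.univ ∉ I)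
    (htall : ∀ A : Set ℕ, A.Infinite → ∃ B ⊆ A, B.Infinite ∧ B ∈ I)
    (hσ : ∃ X : ℕ → Set (Set ℕ), I = ⋃ n, X n ∧
      ∀ n, ∀ Y ⊆ X n, Y.Infinite →
        ∃ Z ⊆ Y, Z.Infinite ∧ ∃ b ∈ I, ∀ A ∈ Z, A ⊆ b) :
    ¬ ∃ f : I → ℕ × (Cardinal.aleph 1).ord.ToType,
      ∀ S : Set I, (¬ ∃ b : I, ∀ x ∈ S, (x : Set ℕ) ⊆ (b : Set ℕ)) →
        ¬ ∃ b : ℕ × (Cardinal.aleph 1).ord.ToType, ∀ x ∈ S, f x ≤ b := by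
  classical
  rintro ⟨f, hf⟩
  -- Step 1: each fiber of the first coordinate is bounded in I
  have hdom : ∀ m : ℕ, ∃ c ∈ I, ∀ x : I, (f x).1 = m → (x : Set ℕ) ⊆ c := by
    intro m
    by_cases hS : ∃ x₀ : I, (f x₀).1 = m
    · obtain ⟨x₀, hx₀⟩ := hS
      -- choose, for each j, a member of the fiber containing j (if any)
      let g : ℕ → I := fun j =>
        if h : ∃ x : I, (f x).1 = m ∧ j ∈ (x : Set ℕ) then h.choose else x₀
      have hg1 : ∀ j, (f (g j)).1 = m := by
        intro j
        by_cases h : ∃ x : I, (f x).1 = m ∧ j ∈ (x : Set ℕ)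
        · simp only [g, dif_pos h]; exact h.choose_spec.1
        · simp only [g, dif_neg h]; exact hx₀
      obtain ⟨b, hb⟩ := omega1_seq_bounded (fun j => (f (g j)).2)
      -- the image of Z := range g is bounded, hence Z is bounded in I
      have himg : ∃ bnd : ℕ × (Cardinal.aleph 1).ord.ToType,
          ∀ x ∈ Set.range g, f x ≤ bnd := by
        refine ⟨(m, b), ?_⟩
        rintro x ⟨j, rfl⟩
        exact ⟨le_of_eq (hg1 j), hb j⟩
      have hZb : ∃ c : I, ∀ x ∈ Set.range g, (x : Set ℕ) ⊆ (c : Set ℕ) := by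
        by_contra hc
        exact hf (Set.range g) hc himg
      obtain ⟨c, hc⟩ := hZb
      refine ⟨(c : Set ℕ), c.2, fun x hx j hj => ?_⟩
      have h : ∃ x : I, (f x).1 = m ∧ j ∈ (x : Set ℕ) := ⟨x, hx, hj⟩
      have hjg : j ∈ (g j : Set ℕ) := by
        simp only [g, dif_pos h]; exact h.choose_spec.2
      exact hc (g j) ⟨j, rfl⟩ hjg
    · exact ⟨∅, hfin ∅ Set.finite_empty, fun x hx => absurd ⟨x, hx⟩ hS⟩
  choose c hcI hcdom using hdom
  -- Step 2: finite unions of the c's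
  let e : ℕ → Set ℕ := fun m => Nat.rec (c 0) (fun k ih => ih ∪ c (k + 1)) m
  have heI : ∀ m, e m ∈ I := by
    intro m
    induction m with
    | zero => exact hcI 0
    | succ k ih => exact hunion _ ih _ (hcI (k + 1))
  have hce : ∀ k m, k ≤ m → c k ⊆ e m := by
    intro k m
    induction m with
    | zero => intro hk; rw [Nat.le_zero.mp hk]; exact subset_rfl
    | succ n ih =>
      intro hk
      rcases Nat.lt_or_ge k (n + 1) with h | h
      · exact (ih (Nat.lt_succ_iff.mp h)).trans Set.subset_union_left
      · have : k = n + 1 := le_antisymm hk h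
        rw [this]; exact Set.subset_union_right
  -- Step 3: complements of the e's are infinite
  have hcompl : ∀ m, {x : ℕ | x ∉ e m}.Infinite := by
    intro m
    intro hfin'
    have : e m ∪ {x : ℕ | x ∉ e m} ∈ I := hunion _ (heI m) _ (hfin _ hfin')
    have huniv : e m ∪ {x : ℕ | x ∉ e m} = Set.univ := Set.union_compl_self (e m)
    rw [huniv] at this
    exact hproper this
  -- Step 4: diagonal sequence
  have hne : ∀ (k : ℕ) (y : ℕ), {x : ℕ | x ∉ e k ∧ y < x}.Nonempty := by
    intro k y
    have : ({x : ℕ | x ∉ e k} \ Set.Iic y).Infinite :=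
      (hcompl k).diff (Set.finite_Iic y)
    obtain ⟨x, hx1, hx2⟩ := this.nonempty
    exact ⟨x, hx1, lt_of_not_ge hx2⟩
  let a : ℕ → ℕ := fun m =>
    Nat.rec (sInf {x : ℕ | x ∉ e 0 ∧ 0 < x}) (fun k ak => sInf {x : ℕ | x ∉ e (k + 1) ∧ ak < x}) m
  have haspec : ∀ m, a m ∉ e m := by
    intro m
    cases m with
    | zero => exact (Nat.sInf_mem (hne 0 0)).1
    | succ k => exact (Nat.sInf_mem (hne (k + 1) (a k))).1
  have hamono : StrictMono a := by
    apply strictMono_nat_of_lt_succ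
    intro n
    exact (Nat.sInf_mem (hne (n + 1) (a n))).2
  -- Step 5: tallness gives a contradiction
  obtain ⟨B, hBA, hBinf, hBI⟩ := htall (Set.range a) (Set.infinite_range_of_injective hamono.injective)
  set k := (f ⟨B, hBI⟩).1 with hk
  have hBc : B ⊆ c k := hcdom k ⟨B, hBI⟩ rfl
  have hP : (a ⁻¹' B).Infinite := by
    intro hPfin
    have : B = a '' (a ⁻¹' B) := (Set.image_preimage_eq_of_subset hBA).symm
    exact hBinf (this ▸ hPfin.image a)
  obtain ⟨m, hmP, hmk⟩ := (hP.diff (Set.finite_Iic k)).nonempty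
  have hmk' : k ≤ m := le_of_lt (lt_of_not_ge hmk)
  exact haspec m (hce k m hmk' (hBc hmP))
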